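/- Let k be a commutative ring which is self-injective, i.e. k is injective as a k-module. Then for every finite distributive lattice T, the correspondence functor F_T is both a projective object and an injective object of the category of correspondence functors over k. -/

import Mathlib

open CategoryTheory
open scoped Classical

structure CorrCat : Type 1 where
  carrier : Type
  [fintype : Fintype carrier]

attribute [instance] CorrCat.fintype

instance : CoeSort CorrCat Type := ⟨CorrCat.carrier⟩

/-- Composition of correspondences: `corrComp R S = RS`. -/
def corrComp {X Y Z : Type*} (R : Set (Z × Y)) (S : Set (Y × X)) : Set (Z × X) :=
  {p | ∃ y, (p.1, y) ∈ R ∧ (y, p.2) ∈ S}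

/-- Opposite correspondence. -/
def corrOp {X Y : Type*} (S : Set (Y × X)) : Set (X × Y) := {p | (p.2, p.1) ∈ S}

/-- Identity correspondence. -/
def deltaCorr (X : Type*) : Set (X × X) := {p | p.1 = p.2}

instance : Category CorrCat where
  Hom X Y := Set (Y.carrier × X.carrier)
  id X := deltaCorr X.carrier
  comp {X Y Z} f g := corrComp g f
  id_comp {X Y} f := by
    show corrComp f (deltaCorr X.carrier) = f
    ext ⟨a, b⟩
    constructor
    · rintro ⟨y, hy, h⟩
      have hyb : y = b := h
      subst hyb
      exact hy
    · intro h
      exact ⟨b, h, rfl⟩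
  comp_id {X Y} f := by
    show corrComp (deltaCorr Y.carrier) f = f
    ext ⟨a, b⟩
    constructor
    · rintro ⟨y, h, hy⟩
      have hay : a = y := h
      subst hay
      exact hy
    · intro h
      exact ⟨a, rfl, h⟩
  assoc {W X Y Z} f g h := by
    show corrComp h (corrComp g f) = corrComp (corrComp h g) f
    ext ⟨a, b⟩
    constructor
    · rintro ⟨y, hy, x, hx1, hx2⟩
      exact ⟨x, ⟨y, hy, hx1⟩, hx2⟩
    · rintro ⟨x, ⟨y, hy, hx1⟩, hx2⟩
      exact ⟨y, hy, x, hx1, hx2⟩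

/-- The action of a correspondence `Q ⊆ Y × X` on a function `φ : X → T`. -/
noncomputable def corrApp {T : Type*} [SemilatticeSup T] [OrderBot T]
    {X Y : Type*} [Fintype X] (Q : Set (Y × X)) (φ : X → T) : Y → T :=
  fun y => (Finset.univ.filter fun x => (y, x) ∈ Q).sup φ

lemma corrApp_id {T : Type*} [SemilatticeSup T] [OrderBot T]
    {X : Type*} [Fintype X] (φ : X → T) : corrApp (deltaCorr X) φ = φ := by
  funext y
  have h : (Finset.univ.filter fun x => (y, x) ∈ deltaCorr X) = {y} := by
    ext x
    rw [Finset.mem_filter]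
    simp [deltaCorr, eq_comm]
  unfold corrApp
  rw [h, Finset.sup_singleton]

lemma corrApp_comp {T : Type*} [SemilatticeSup T] [OrderBot T]
    {X Y Z : Type*} [Fintype X] [Fintype Y]
    (R : Set (Z × Y)) (S : Set (Y × X)) (φ : X → T) :
    corrApp (corrComp R S) φ = corrApp R (corrApp S φ) := by
  funext z
  apply le_antisymm
  · apply Finset.sup_le
    intro x hx
    rw [Finset.mem_filter] at hx
    obtain ⟨-, y, hzy, hyx⟩ := hx
    calc φ x ≤ corrApp S φ y :=
          Finset.le_sup (Finset.mem_filter.2 ⟨Finset.mem_univ _, hyx⟩)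
    _ ≤ _ := Finset.le_sup (f := corrApp S φ)
          (Finset.mem_filter.2 ⟨Finset.mem_univ _, hzy⟩)
  · apply Finset.sup_le
    intro y hy
    rw [Finset.mem_filter] at hy
    apply Finset.sup_le
    intro x hx
    rw [Finset.mem_filter] at hx
    exact Finset.le_sup (Finset.mem_filter.2 ⟨Finset.mem_univ _, ⟨y, hy.2, hx.2⟩⟩)

variable (k : Type) [CommRing k]

/-- The correspondence functor `F_T` associated to a finite lattice `T`. -/
noncomputable def FT (T : Type) [Lattice T] [OrderBot T] [Fintype T] :
    CorrCat ⥤ ModuleCat k where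
  obj X := ModuleCat.of k ((X.carrier → T) →₀ k)
  map {X Y} Q := ModuleCat.ofHom (Finsupp.lmapDomain k k (corrApp (T := T) Q))
  map_id X := by
    show ModuleCat.ofHom (Finsupp.lmapDomain k k (corrApp (deltaCorr X.carrier))) = _
    have : (corrApp (T := T) (deltaCorr X.carrier)) = id := by
      funext φ
      exact corrApp_id φ
    rw [this, Finsupp.lmapDomain_id]
    rfl
  map_comp {X Y Z} f g := by
    show ModuleCat.ofHom (Finsupp.lmapDomain k k (corrApp (corrComp g f))) = _
    have : (corrApp (T := T) (corrComp g f)) = corrApp g ∘ corrApp f := by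
      funext φ
      exact corrApp_comp g f φ
    rw [this, Finsupp.lmapDomain_comp]
    rfl


namespace CFAux

open Finset


variable {α β : Type*} [Fintype α] [Fintype β] [DecidableEq α] [DecidableEq β]

/-- row of a relation -/
noncomputable def rrow (r : β → α → Prop) (x : α) : Finset β :=
  univ.filter (fun y => r y x)

noncomputable def rimg (r : β → α → Prop) (S : Finset α) : Finset β :=
  S.biUnion (rrow r)

noncomputable def rbox (r : β → α → Prop) (Φ : Finset β) : Finset α :=
  univ.filter (fun x => rrow r x ⊆ Φ)

lemma rimg_union (r : β → α → Prop) (S S' : Finset α) :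
    rimg r (S ∪ S') = rimg r S ∪ rimg r S' := by
  ext y; simp [rimg, Finset.mem_biUnion, Finset.mem_union, or_and_right, exists_or]

lemma rrow_subset_rimg (r : β → α → Prop) {x : α} {S : Finset α} (hx : x ∈ S) :
    rrow r x ⊆ rimg r S := fun y hy => Finset.mem_biUnion.2 ⟨x, hx, hy⟩

lemma rimg_subset_iff (r : β → α → Prop) {S : Finset α} {C : Finset β} :
    rimg r S ⊆ C ↔ ∀ x ∈ S, rrow r x ⊆ C := by
  simp [rimg, Finset.biUnion_subset]

/-- The key combinatorial identity. -/
lemma key (r : β → α → Prop) (C : Finset β) (Θ : Finset α) :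
    ∑ Ψ ∈ univ.filter (fun Ψ : Finset α => Θ ⊆ Ψ ∧ rimg r Ψ = C), (-1 : ℤ) ^ (Ψ \ Θ).card
    = ∑ Φ ∈ univ.filter (fun Φ : Finset β => Φ ⊆ C ∧ rbox r Φ = Θ), (-1 : ℤ) ^ (C \ Φ).card := by
  set D1 : Finset α := univ.filter (fun x => x ∉ Θ ∧ rrow r x ⊆ C) with hD1
  set C1 : Finset β := C \ rimg r Θ with hC1
  set AU : Finset β → Finset α := fun U => D1.filter (fun x => Disjoint (rrow r x) U) with hAU
  -- Step 1 : LHS = sum over S = Ψ \ Θ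
  have step1 : ∑ Ψ ∈ univ.filter (fun Ψ : Finset α => Θ ⊆ Ψ ∧ rimg r Ψ = C),
      (-1 : ℤ) ^ (Ψ \ Θ).card
      = ∑ S ∈ univ.filter (fun S : Finset α => Disjoint S Θ ∧ rimg r Θ ∪ rimg r S = C),
        (-1 : ℤ) ^ S.card := by
    refine Finset.sum_nbij' (fun Ψ => Ψ \ Θ) (fun S => S ∪ Θ) ?_ ?_ ?_ ?_ ?_
    · intro Ψ hΨ
      rw [mem_filter] at hΨ ⊢
      obtain ⟨-, hsub, him⟩ := hΨ
      refine ⟨mem_univ _, sdiff_disjoint, ?_⟩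
      rw [← rimg_union, Finset.union_sdiff_of_subset hsub]
      exact him
    · intro S hS
      rw [mem_filter] at hS ⊢
      obtain ⟨-, hdisj, him⟩ := hS
      refine ⟨mem_univ _, Finset.subset_union_right, ?_⟩
      rw [rimg_union, union_comm]
      exact him
    · intro Ψ hΨ
      rw [mem_filter] at hΨ
      exact Finset.sdiff_union_of_subset hΨ.2.1
    · intro S hS
      rw [mem_filter] at hS
      exact Finset.union_sdiff_cancel_right hS.2.1
    · intro Ψ hΨ; rfl
  rw [step1]
  -- the common value
  set Com : ℤ := ∑ U ∈ C1.powerset, (if AU U = ∅ then (-1 : ℤ) ^ U.card else 0) with hCom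
  -- auxiliary local facts
  have hpow : ∀ V : Finset β, ∑ U ∈ V.powerset, (-1 : ℤ) ^ U.card
      = if V = ∅ then 1 else 0 := fun V => Finset.sum_powerset_neg_one_pow_card
  have hpowα : ∀ V : Finset α, ∑ U ∈ V.powerset, (-1 : ℤ) ^ U.card
      = if V = ∅ then 1 else 0 := fun V => Finset.sum_powerset_neg_one_pow_card
  by_cases h : rimg r Θ ⊆ C
  · -- positive case
    have lhs_eq : ∑ S ∈ univ.filter
          (fun S : Finset α => Disjoint S Θ ∧ rimg r Θ ∪ rimg r S = C),
        (-1 : ℤ) ^ S.card = Com := by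
      have hset : univ.filter
            (fun S : Finset α => Disjoint S Θ ∧ rimg r Θ ∪ rimg r S = C)
          = D1.powerset.filter (fun S => C1 ⊆ rimg r S) := by
        ext S
        simp only [mem_filter, mem_powerset, mem_univ, true_and]
        constructor
        · rintro ⟨hdisj, hun⟩
          refine ⟨?_, ?_⟩
          · intro x hx
            rw [hD1, mem_filter]
            refine ⟨mem_univ _, fun hxΘ => Finset.disjoint_left.1 hdisj hx hxΘ, ?_⟩
            exact (rrow_subset_rimg r hx).trans ((Finset.subset_union_right).trans hun.le)
          · intro y hy
            rw [hC1, mem_sdiff] at hy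
            have : y ∈ rimg r Θ ∪ rimg r S := hun.ge hy.1
            rcases mem_union.1 this with h1 | h2
            · exact absurd h1 hy.2
            · exact h2
        · rintro ⟨hsub, hcov⟩
          constructor
          · rw [Finset.disjoint_left]
            intro x hxS hxΘ
            exact ((mem_filter.1 (hsub hxS)).2.1) hxΘ
          · apply Finset.Subset.antisymm
            · apply Finset.union_subset h
              rw [rimg_subset_iff]
              exact fun x hx => (mem_filter.1 (hsub hx)).2.2
            · intro y hy
              by_cases hyΘ : y ∈ rimg r Θ
              · exact mem_union.2 (Or.inl hyΘ)
              · exact mem_union.2 (Or.inr (hcov (by rw [hC1, mem_sdiff]; exact ⟨hy, hyΘ⟩)))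
      rw [hset, Finset.sum_filter]
      have inner1 : ∀ S : Finset α, (if C1 ⊆ rimg r S then (-1 : ℤ) ^ S.card else 0)
          = ∑ U ∈ C1.powerset,
              (-1 : ℤ) ^ S.card * (if Disjoint U (rimg r S) then (-1 : ℤ) ^ U.card else 0) := by
        intro S
        rw [← Finset.mul_sum]
        have e1 : ∑ U ∈ C1.powerset, (if Disjoint U (rimg r S) then (-1 : ℤ) ^ U.card else 0)
            = ∑ U ∈ (C1 \ rimg r S).powerset, (-1 : ℤ) ^ U.card := by
          rw [← Finset.sum_subset (Finset.powerset_mono.2 sdiff_subset)]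
          · exact Finset.sum_congr rfl (fun U hU => if_pos
              ((Finset.subset_sdiff.1 (mem_powerset.1 hU)).2))
          · intro U hU hU2
            apply if_neg
            intro hdisj
            exact hU2 (mem_powerset.2 (Finset.subset_sdiff.2 ⟨mem_powerset.1 hU, hdisj⟩))
        rw [e1, hpow]
        simp only [Finset.sdiff_eq_empty_iff_subset]
        split_ifs <;> ring
      rw [Finset.sum_congr rfl (fun S _ => inner1 S), Finset.sum_comm]
      apply Finset.sum_congr rfl
      intro U hU
      have e2 : ∀ S : Finset α, (-1 : ℤ) ^ S.card *
            (if Disjoint U (rimg r S) then (-1 : ℤ) ^ U.card else 0)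
          = (-1 : ℤ) ^ U.card * (if Disjoint U (rimg r S) then (-1 : ℤ) ^ S.card else 0) := by
        intro S; split_ifs <;> ring
      rw [Finset.sum_congr rfl (fun S _ => e2 S), ← Finset.mul_sum]
      have hdisj_iff : ∀ S : Finset α, S ⊆ D1 →
          (Disjoint U (rimg r S) ↔ S ⊆ AU U) := by
        intro S hS
        rw [rimg, Finset.disjoint_biUnion_right, hAU]
        constructor
        · intro hall x hx
          exact mem_filter.2 ⟨hS hx, (hall x hx).symm⟩
        · intro hsub x hx
          exact ((mem_filter.1 (hsub hx)).2).symm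
      have hAUsub : AU U ⊆ D1 := by rw [hAU]; exact Finset.filter_subset _ _
      have e3 : ∑ S ∈ D1.powerset, (if Disjoint U (rimg r S) then (-1 : ℤ) ^ S.card else 0)
          = ∑ S ∈ (AU U).powerset, (-1 : ℤ) ^ S.card := by
        rw [← Finset.sum_subset (Finset.powerset_mono.2 hAUsub)]
        · refine Finset.sum_congr rfl (fun S hS => if_pos ?_)
          have hSsub := mem_powerset.1 hS
          exact (hdisj_iff S (hSsub.trans hAUsub)).2 hSsub
        · intro S hS hS2
          apply if_neg
          intro hdisj
          exact hS2 (mem_powerset.2 ((hdisj_iff S (mem_powerset.1 hS)).1 hdisj))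
      rw [e3, hpowα]
      split_ifs <;> ring
    rw [lhs_eq]
    -- now the RHS
    have rhs_eq : ∑ Φ ∈ univ.filter (fun Φ : Finset β => Φ ⊆ C ∧ rbox r Φ = Θ),
        (-1 : ℤ) ^ (C \ Φ).card = Com := by
      have step3 : ∑ Φ ∈ univ.filter (fun Φ : Finset β => Φ ⊆ C ∧ rbox r Φ = Θ),
          (-1 : ℤ) ^ (C \ Φ).card
          = ∑ U ∈ univ.filter (fun U : Finset β => U ⊆ C ∧ rbox r (C \ U) = Θ),
            (-1 : ℤ) ^ U.card := by
        refine Finset.sum_nbij' (fun Φ => C \ Φ) (fun U => C \ U) ?_ ?_ ?_ ?_ ?_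
        · intro Φ hΦ
          rw [mem_filter] at hΦ ⊢
          refine ⟨mem_univ _, sdiff_subset, ?_⟩
          rw [Finset.sdiff_sdiff_eq_self hΦ.2.1]
          exact hΦ.2.2
        · intro U hU
          rw [mem_filter] at hU ⊢
          exact ⟨mem_univ _, sdiff_subset, hU.2.2⟩
        · intro Φ hΦ
          rw [mem_filter] at hΦ
          exact Finset.sdiff_sdiff_eq_self hΦ.2.1
        · intro U hU
          rw [mem_filter] at hU
          exact Finset.sdiff_sdiff_eq_self hU.2.1
        · intro Φ hΦ; rfl
      rw [step3]
      have hiff : ∀ U : Finset β, U ⊆ C →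
          ((rbox r (C \ U) = Θ) ↔ (U ⊆ C1 ∧ AU U = ∅)) := by
        intro U hUC
        constructor
        · intro hEq
          constructor
          · intro u hu
            rw [hC1, mem_sdiff]
            refine ⟨hUC hu, ?_⟩
            intro hurimg
            obtain ⟨x, hxΘ, hurow⟩ := Finset.mem_biUnion.1 hurimg
            rw [← hEq, rbox, mem_filter] at hxΘ
            have := hxΘ.2 hurow
            rw [mem_sdiff] at this
            exact this.2 hu
          · rw [Finset.filter_eq_empty_iff]
            intro x hxD1 hdisj
            rw [hD1, mem_filter] at hxD1
            have hxbox : x ∈ rbox r (C \ U) := by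
              rw [rbox, mem_filter]
              exact ⟨mem_univ _, Finset.subset_sdiff.2 ⟨hxD1.2.2, hdisj⟩⟩
            rw [hEq] at hxbox
            exact hxD1.2.1 hxbox
        · rintro ⟨hU1, hA⟩
          ext x
          rw [rbox, mem_filter]
          constructor
          · rintro ⟨-, hsub⟩
            rw [Finset.subset_sdiff] at hsub
            by_contra hxΘ
            have hxD1 : x ∈ D1 := by
              rw [hD1, mem_filter]; exact ⟨mem_univ _, hxΘ, hsub.1⟩
            exact (Finset.filter_eq_empty_iff.1 hA hxD1) hsub.2
          · intro hxΘ
            refine ⟨mem_univ _, Finset.subset_sdiff.2 ⟨?_, ?_⟩⟩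
            · exact (rrow_subset_rimg r hxΘ).trans h
            · have hd : Disjoint C1 (rimg r Θ) := by
                rw [hC1]; exact Finset.sdiff_disjoint
              exact (Disjoint.mono hU1 (rrow_subset_rimg r hxΘ) hd).symm
      have hset2 : univ.filter (fun U : Finset β => U ⊆ C ∧ rbox r (C \ U) = Θ)
          = C1.powerset.filter (fun U => AU U = ∅) := by
        ext U
        simp only [mem_filter, mem_powerset, mem_univ, true_and]
        constructor
        · rintro ⟨hUC, hbox⟩
          exact (hiff U hUC).1 hbox
        · rintro ⟨hU1, hA⟩
          have hUC : U ⊆ C := hU1.trans (by rw [hC1]; exact sdiff_subset)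
          exact ⟨hUC, (hiff U hUC).2 ⟨hU1, hA⟩⟩
      rw [hset2, Finset.sum_filter]
    rw [rhs_eq]
  · -- negative case : both sides are zero
    have l0 : univ.filter
        (fun S : Finset α => Disjoint S Θ ∧ rimg r Θ ∪ rimg r S = C) = ∅ := by
      rw [Finset.filter_eq_empty_iff]
      rintro S - ⟨-, hun⟩
      exact h (hun ▸ Finset.subset_union_left)
    have r0 : univ.filter (fun Φ : Finset β => Φ ⊆ C ∧ rbox r Φ = Θ) = ∅ := by
      rw [Finset.filter_eq_empty_iff]
      rintro Φ - ⟨hΦC, hbox⟩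
      apply h
      rw [rimg_subset_iff]
      intro x hx
      rw [← hbox, rbox, mem_filter] at hx
      exact hx.2.trans hΦC
    rw [l0, r0]
    simp


/-- Möbius inversion in a "sandwich" form. -/
lemma sum_sandwich {γ : Type*} [Fintype γ] [DecidableEq γ] (A B : Finset γ) :
    ∑ F ∈ univ.filter (fun F : Finset γ => A ⊆ F ∧ F ⊆ B), (-1 : ℤ) ^ (B \ F).card
    = if A = B then 1 else 0 := by
  by_cases hAB : A ⊆ B
  · have : ∑ F ∈ univ.filter (fun F : Finset γ => A ⊆ F ∧ F ⊆ B), (-1 : ℤ) ^ (B \ F).card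
        = ∑ U ∈ (B \ A).powerset, (-1 : ℤ) ^ U.card := by
      refine Finset.sum_nbij' (fun F => B \ F) (fun U => B \ U) ?_ ?_ ?_ ?_ ?_
      · intro F hF
        rw [mem_filter] at hF
        exact mem_powerset.2 (Finset.sdiff_subset_sdiff (le_refl B) hF.2.1)
      · intro U hU
        rw [mem_powerset, Finset.subset_sdiff] at hU
        rw [mem_filter]
        exact ⟨mem_univ _, Finset.subset_sdiff.2 ⟨hAB, hU.2.symm⟩, sdiff_subset⟩
      · intro F hF
        rw [mem_filter] at hF
        exact Finset.sdiff_sdiff_eq_self hF.2.2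
      · intro U hU
        rw [mem_powerset] at hU
        exact Finset.sdiff_sdiff_eq_self (hU.trans sdiff_subset)
      · intro F hF; rfl
    rw [this, Finset.sum_powerset_neg_one_pow_card]
    congr 1
    rw [Finset.sdiff_eq_empty_iff_subset, eq_iff_iff]
    constructor
    · intro h; exact Finset.Subset.antisymm hAB h
    · intro h; exact h.ge
  · rw [Finset.filter_eq_empty_iff.2, if_neg]
    · simp
    · intro h; exact hAB (h ▸ Finset.Subset.refl A)
    · rintro F - ⟨h1, h2⟩; exact hAB (h1.trans h2)

section Graph

variable {γ : Type*} [Fintype γ] [DecidableEq γ] {E : Type*} [Fintype E] [DecidableEq E]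

/-- The graph of a `Finset`-valued function. -/
noncomputable def gr (ψ : γ → Finset E) : Finset (γ × E) :=
  univ.filter (fun p => p.2 ∈ ψ p.1)

lemma mem_gr (ψ : γ → Finset E) (p : γ × E) : p ∈ gr ψ ↔ p.2 ∈ ψ p.1 := by
  simp [gr]

lemma gr_le_gr {φ ψ : γ → Finset E} : gr φ ⊆ gr ψ ↔ φ ≤ ψ := by
  constructor
  · intro h x e he
    exact (mem_gr ψ (x, e)).1 (h ((mem_gr φ (x, e)).2 he))
  · intro h p hp
    exact (mem_gr ψ p).2 (h p.1 ((mem_gr φ p).1 hp))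

lemma gr_injective : Function.Injective (gr : (γ → Finset E) → Finset (γ × E)) := by
  intro φ ψ h
  funext x
  ext e
  have h' : ((x, e) ∈ gr φ) ↔ ((x, e) ∈ gr ψ) := by rw [h]
  simpa [mem_gr] using h'

lemma gr_bijective : Function.Bijective (gr : (γ → Finset E) → Finset (γ × E)) := by
  refine ⟨gr_injective, ?_⟩
  intro Ψ
  refine ⟨fun x => univ.filter (fun e => (x, e) ∈ Ψ), ?_⟩
  ext ⟨x, e⟩
  simp [mem_gr]

lemma card_gr_sdiff (φ ψ : γ → Finset E) :
    (gr ψ \ gr φ).card = ∑ x : γ, ((ψ x) \ (φ x)).card := by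
  have : gr ψ \ gr φ = univ.filter (fun p : γ × E => p.2 ∈ ψ p.1 \ φ p.1) := by
    ext ⟨x, e⟩
    simp [mem_gr, mem_sdiff]
  rw [this, Finset.card_filter, Fintype.sum_prod_type]
  refine Finset.sum_congr rfl (fun x _ => ?_)
  rw [← Finset.sum_filter]
  simp only [Finset.sum_const, smul_eq_mul, mul_one]
  congr 1
  ext a
  simp [mem_sdiff]

end Graph

/-- A fixed indicator function with a frozen `Decidable` instance. -/
noncomputable def ind (P : Prop) : ℤ := if P then 1 else 0

lemma ind_of (P : Prop) (h : P) : ind P = 1 := by simp [ind, h]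

lemma ind_of_not (P : Prop) (h : ¬ P) : ind P = 0 := by simp [ind, h]

lemma ind_congr {P Q : Prop} (h : P ↔ Q) : ind P = ind Q := by
  by_cases hp : P
  · rw [ind_of P hp, ind_of Q (h.1 hp)]
  · rw [ind_of_not P hp, ind_of_not Q (fun hq => hp (h.2 hq))]

lemma ind_mul_ind (P Q : Prop) (x : ℤ) : ind P * (ind Q * x) = ind (P ∧ Q) * x := by
  by_cases hp : P <;> by_cases hq : Q <;> simp [ind, hp, hq]

lemma sum_ind {A : Type*} (s : Finset A) (P : A → Prop) [DecidablePred P] (f : A → ℤ) :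
    ∑ a ∈ s, ind (P a) * f a = ∑ a ∈ s.filter P, f a := by
  rw [Finset.sum_filter]
  refine Finset.sum_congr rfl (fun a _ => ?_)
  by_cases h : P a <;> simp [ind, h]

lemma ite_eq_ind {P : Prop} [Decidable P] : (if P then (1 : ℤ) else 0) = ind P := by
  by_cases h : P <;> simp [ind, h]

/-- `ind` version of `key`. -/
lemma key' {α β : Type*} [Fintype α] [Fintype β] [DecidableEq α] [DecidableEq β]
    (r : β → α → Prop)
    (C : Finset β) (Θ : Finset α) :
    ∑ Ψ : Finset α, ind (Θ ⊆ Ψ ∧ rimg r Ψ = C) * (-1 : ℤ) ^ (Ψ \ Θ).card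
    = ∑ Φ : Finset β, ind (Φ ⊆ C ∧ rbox r Φ = Θ) * (-1 : ℤ) ^ (C \ Φ).card := by
  refine (sum_ind univ _ _).trans ((key r C Θ).trans (sum_ind univ _ _).symm)

/-- `ind` version of `sum_sandwich`. -/
lemma sum_sandwich' {γ : Type*} [Fintype γ] [DecidableEq γ] (A B : Finset γ) :
    ∑ F : Finset γ, ind (A ⊆ F ∧ F ⊆ B) * (-1 : ℤ) ^ (B \ F).card = ind (A = B) := by
  refine (sum_ind univ _ _).trans ((sum_sandwich A B).trans ite_eq_ind)


end CFAux


namespace CFMain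

open CFAux Finset

/-- helper : pulling an `if` into the filter of a sum -/
lemma sum_filter_ite {A : Type*} (s : Finset A) (P Q : A → Prop) (f : A → ℤ) :
    ∑ a ∈ s.filter P, (if Q a then f a else 0)
      = ∑ a ∈ s.filter (fun a => P a ∧ Q a), f a := by
  rw [← Finset.sum_filter, Finset.filter_filter]

variable {E : Type} [Fintype E]

/-- The object of `CorrCat` on a finite type. -/
noncomputable def obE (E : Type) [Fintype E] : CorrCat := ⟨E⟩

/-- A morphism of `CorrCat`, viewed as a set of pairs. -/
def toSet {X Y : CorrCat} (R : X ⟶ Y) : Set (Y.carrier × X.carrier) := R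

/-- The correspondence `obE E ⟶ X` encoding `ψ : X → Finset E`. -/
def QE {X : CorrCat} (ψ : X.carrier → Finset E) : obE E ⟶ X :=
  {p : X.carrier × E | p.2 ∈ ψ p.1}

/-- The correspondence `X ⟶ obE E` given by the complement of the graph of `φ`. -/
def WE {X : CorrCat} (φ : X.carrier → Finset E) : X ⟶ obE E :=
  {p : E × X.carrier | p.1 ∉ φ p.2}

/-- "Box" action of a correspondence. -/
noncomputable def piR {X Y : CorrCat} (R : X ⟶ Y) (φ : Y.carrier → Finset E) :
    X.carrier → Finset E :=
  fun x => univ.filter (fun e => ∀ y : Y.carrier, (y, x) ∈ toSet R → e ∈ φ y)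

lemma mem_corrApp {X Y : CorrCat} (R : X ⟶ Y) (ψ : X.carrier → Finset E)
    (y : Y.carrier) (e : E) :
    e ∈ corrApp (toSet R) ψ y ↔ ∃ x, (y, x) ∈ toSet R ∧ e ∈ ψ x := by
  unfold corrApp
  rw [Finset.mem_sup]
  constructor
  · rintro ⟨x, hx, he⟩
    exact ⟨x, (Finset.mem_filter.1 hx).2, he⟩
  · rintro ⟨x, hx, he⟩
    exact ⟨x, Finset.mem_filter.2 ⟨mem_univ _, hx⟩, he⟩

lemma corrApp_QE {X : CorrCat} (ψ : X.carrier → Finset E) :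
    corrApp (toSet (QE ψ)) (fun e => ({e} : Finset E)) = ψ := by
  funext x
  ext e
  rw [mem_corrApp (QE ψ) _ x e]
  constructor
  · rintro ⟨e', he', he⟩
    have he : e = e' := Finset.mem_singleton.1 he
    exact he ▸ he'
  · intro he
    exact ⟨e, he, Finset.mem_singleton_self e⟩

lemma QE_comp {X Y : CorrCat} (R : X ⟶ Y) (ψ : X.carrier → Finset E) :
    QE (corrApp (toSet R) ψ) = QE ψ ≫ R := by
  show _ = corrComp R (QE ψ)
  ext ⟨y, e⟩
  constructor
  · intro h
    have h' : e ∈ corrApp (toSet R) ψ y := h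
    obtain ⟨x, hx, he⟩ := (mem_corrApp R ψ y e).1 h'
    exact ⟨x, hx, he⟩
  · rintro ⟨x, hx, he⟩
    exact (mem_corrApp R ψ y e).2 ⟨x, hx, he⟩

lemma WE_comp {X Y : CorrCat} (R : X ⟶ Y) (φ : Y.carrier → Finset E) :
    R ≫ WE φ = WE (piR R φ) := by
  show corrComp (WE φ) R = _
  ext ⟨e, x⟩
  constructor
  · rintro ⟨y, hey, hyx⟩
    show e ∉ piR R φ x
    intro hmem
    have key : ∀ {p : E → Prop} {_i : DecidablePred p} {a : E}, a ∈ Finset.filter p univ → p a :=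
      fun h => (Finset.mem_filter.1 h).2
    exact hey (key hmem y hyx)
  · intro h
    have h' : ¬ (e ∈ (univ : Finset E) ∧ ∀ y : Y.carrier, (y, x) ∈ toSet R → e ∈ φ y) :=
      fun hm => h (Finset.mem_filter.2 hm)
    push_neg at h'
    obtain ⟨y, hyx, hey⟩ := h' (mem_univ _)
    exact ⟨y, hey, hyx⟩

lemma corrApp_WE_diag {X : CorrCat} (φ χ : X.carrier → Finset E) :
    (∀ e : E, e ∉ corrApp (toSet (WE φ)) χ e) ↔ χ ≤ φ := by
  constructor
  · intro h x e he
    by_contra hne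
    exact h e ((mem_corrApp (WE φ) χ e e).2 ⟨x, hne, he⟩)
  · intro h e he
    obtain ⟨x, hx, he2⟩ := (mem_corrApp (WE φ) χ e e).1 he
    exact hx (h x he2)

/-- The Möbius coefficient. -/
noncomputable def kappa {X : Type} [Fintype X] (φ ψ : X → Finset E) : ℤ :=
  ind (φ ≤ ψ) * (-1) ^ (∑ x, ((ψ x) \ (φ x)).card)

lemma kappa_gr {X : Type} [Fintype X] (φ ψ : X → Finset E) :
    kappa φ ψ = ind (gr φ ⊆ gr ψ) * (-1 : ℤ) ^ ((gr ψ \ gr φ).card) := by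
  rw [kappa, card_gr_sdiff, ind_congr gr_le_gr.symm]

/-- The central naturality identity for the Möbius coefficients. -/
lemma natcoeff {X Y : CorrCat} (R : X ⟶ Y) (θ : X.carrier → Finset E)
    (χ : Y.carrier → Finset E) :
    ∑ ψ : X.carrier → Finset E, ind (corrApp (toSet R) ψ = χ) * kappa θ ψ
    = ∑ φ' : Y.carrier → Finset E, ind (piR R φ' = θ) * kappa φ' χ := by
  set r : (Y.carrier × E) → (X.carrier × E) → Prop :=
    fun p q => (p.1, q.1) ∈ toSet R ∧ p.2 = q.2 with hr
  have himg : ∀ ψ : X.carrier → Finset E,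
      rimg r (gr ψ) = gr (corrApp (toSet R) ψ) := by
    intro ψ
    ext ⟨y, e⟩
    simp only [rimg, rrow, Finset.mem_biUnion, Finset.mem_filter, mem_univ, true_and,
      mem_gr, mem_corrApp R ψ y e, hr, Prod.exists]
    constructor
    · rintro ⟨x, e', hq, hR, he⟩
      refine ⟨x, hR, ?_⟩
      cases he
      exact hq
    · rintro ⟨x, hR, he⟩
      exact ⟨x, e, he, hR, rfl⟩
  have hbox : ∀ φ' : Y.carrier → Finset E, rbox r (gr φ') = gr (piR R φ') := by
    intro φ'
    ext ⟨x, e⟩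
    simp only [rbox, rrow, Finset.mem_filter, mem_univ, true_and, mem_gr, piR, hr,
      Finset.subset_iff, Prod.forall]
    constructor
    · intro hsub y hyx
      exact hsub (a := y) (b := e) ⟨hyx, rfl⟩
    · rintro hall y e' ⟨hyx, he⟩
      cases he
      exact hall y hyx
  have lhs_eq : ∑ ψ : X.carrier → Finset E, ind (corrApp (toSet R) ψ = χ) * kappa θ ψ
      = ∑ Ψ : Finset (X.carrier × E),
          ind (gr θ ⊆ Ψ ∧ rimg r Ψ = gr χ) * (-1 : ℤ) ^ ((Ψ \ gr θ).card) := by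
    refine Eq.trans (Finset.sum_congr rfl (fun ψ _ => ?_))
      (Fintype.sum_bijective gr gr_bijective _ _ (fun ψ => rfl))
    rw [kappa_gr, ind_mul_ind]
    apply congrArg (· * ((-1 : ℤ) ^ ((gr ψ \ gr θ).card)))
    apply ind_congr
    rw [himg]
    constructor
    · rintro ⟨h1, h2⟩
      exact ⟨h2, congrArg gr h1⟩
    · rintro ⟨h2, h1⟩
      exact ⟨gr_injective h1, h2⟩
  have rhs_eq : ∑ φ' : Y.carrier → Finset E, ind (piR R φ' = θ) * kappa φ' χ
      = ∑ Φ : Finset (Y.carrier × E),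
          ind (Φ ⊆ gr χ ∧ rbox r Φ = gr θ) * (-1 : ℤ) ^ ((gr χ \ Φ).card) := by
    refine Eq.trans (Finset.sum_congr rfl (fun φ' _ => ?_))
      (Fintype.sum_bijective gr gr_bijective _ _ (fun φ' => rfl))
    rw [kappa_gr, ind_mul_ind]
    apply congrArg (· * ((-1 : ℤ) ^ ((gr χ \ gr φ').card)))
    apply ind_congr
    rw [hbox]
    constructor
    · rintro ⟨h1, h2⟩
      exact ⟨h2, congrArg gr h1⟩
    · rintro ⟨h2, h1⟩
      exact ⟨gr_injective h1, h2⟩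
  rw [lhs_eq, rhs_eq]
  exact key' r (gr χ) (gr θ)

/-- Möbius inversion: the `kappa` matrix is inverse to the zeta matrix. -/
lemma kappa_delta {X : Type} [Fintype X] (χ ψ : X → Finset E) :
    ∑ φ : X → Finset E, ind (χ ≤ φ) * kappa φ ψ = ind (χ = ψ) := by
  have step : ∑ φ : X → Finset E, ind (χ ≤ φ) * kappa φ ψ
      = ∑ F : Finset (X × E),
          ind (gr χ ⊆ F ∧ F ⊆ gr ψ) * (-1 : ℤ) ^ ((gr ψ \ F).card) := by
    refine Eq.trans (Finset.sum_congr rfl (fun φ _ => ?_))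
      (Fintype.sum_bijective gr gr_bijective _ _ (fun φ => rfl))
    rw [kappa_gr, ind_mul_ind]
    apply congrArg (· * ((-1 : ℤ) ^ ((gr ψ \ gr φ).card)))
    exact ind_congr (and_congr gr_le_gr.symm Iff.rfl)
  rw [step, sum_sandwich']
  apply ind_congr
  exact ⟨fun h => gr_injective h, fun h => h ▸ rfl⟩

end CFMain


namespace CFFunc

open CFAux CFMain Finset CategoryTheory

lemma toSet_eq {X Y : CorrCat} (R : X ⟶ Y) :
    toSet R = (R : Set (Y.carrier × X.carrier)) := rfl

/-- `k`-valued indicator with a frozen decidability instance. -/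
noncomputable def indk (k : Type) [CommRing k] (P : Prop) : k := if P then 1 else 0

variable {k : Type} [CommRing k]

lemma indk_congr {P Q : Prop} (h : P ↔ Q) : indk k P = indk k Q := by
  by_cases hp : P
  · rw [indk, indk, if_pos hp, if_pos (h.1 hp)]
  · rw [indk, indk, if_neg hp, if_neg (fun hq => hp (h.2 hq))]

lemma cast_ind (P : Prop) : ((ind P : ℤ) : k) = indk k P := by
  by_cases h : P <;> simp [ind, indk, h]

lemma indk_mul {P : Prop} [Decidable P] (x : k) :
    indk k P * x = if P then x else 0 := by
  by_cases h : P <;> simp [indk, h]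

lemma sum_indk_right {A : Type*} [Fintype A] [DecidableEq A] (g : A) (F : A → k) :
    ∑ a : A, indk k (g = a) * F a = F g := by
  rw [Finset.sum_congr rfl (fun a _ => indk_mul (F a)), Finset.sum_ite_eq]
  simp

lemma sum_indk_left {A : Type*} [Fintype A] [DecidableEq A] (g : A) (F : A → k) :
    ∑ a : A, indk k (a = g) * F a = F g := by
  rw [Finset.sum_congr rfl (fun a _ => indk_mul (F a)), Finset.sum_ite_eq']
  simp

lemma finsupp_decomp {A : Type*} [Fintype A] (v : A →₀ k) :
    ∑ a : A, Finsupp.single a (v a) = v := by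
  ext b
  rw [Finsupp.finset_sum_apply]
  rw [Finset.sum_congr rfl (fun a _ => Finsupp.single_apply)]
  rw [Finset.sum_ite_eq']
  simp

variable {E : Type} [Fintype E]

/-- The canonical generator of `F_B (obE E)`. -/
noncomputable def eta (E : Type) [Fintype E] : (obE E).carrier → Finset E := fun e => {e}

/-- The theta map : component of the universal natural transformation into `F_B`. -/
noncomputable def thetaApp (M : CorrCat ⥤ ModuleCat k)
    (β : M.obj (obE E) →ₗ[k] k) (X : CorrCat) :
    M.obj X →ₗ[k] ((X.carrier → Finset E) →₀ k) where
  toFun m := ∑ ψ : X.carrier → Finset E,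
    Finsupp.single ψ (∑ φ : X.carrier → Finset E,
      ((kappa φ ψ : ℤ) : k) * β (M.map (WE φ) m))
  map_add' m m' := by
    simp only [map_add, mul_add, Finsupp.single_add, Finset.sum_add_distrib]
  map_smul' c m := by
    simp only [map_smul, smul_eq_mul, RingHom.id_apply]
    rw [Finset.smul_sum]
    refine Finset.sum_congr rfl (fun ψ _ => ?_)
    rw [Finsupp.smul_single]
    congr 1
    rw [Finset.smul_sum]
    exact Finset.sum_congr rfl (fun φ _ => by rw [smul_eq_mul]; ring)

lemma thetaApp_apply (M : CorrCat ⥤ ModuleCat k) (β : M.obj (obE E) →ₗ[k] k)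
    (X : CorrCat) (m : M.obj X) :
    thetaApp M β X m = ∑ ψ : X.carrier → Finset E,
      Finsupp.single ψ (∑ φ : X.carrier → Finset E,
        ((kappa φ ψ : ℤ) : k) * β (M.map (WE φ) m)) := rfl

/-- Naturality of theta. -/
lemma theta_natural (M : CorrCat ⥤ ModuleCat k) (β : M.obj (obE E) →ₗ[k] k)
    {X Y : CorrCat} (R : X ⟶ Y) (m : M.obj X) :
    thetaApp M β Y (M.map R m)
      = Finsupp.lmapDomain k k (corrApp (toSet R)) (thetaApp M β X m) := by
  rw [thetaApp_apply, thetaApp_apply, map_sum]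
  have hmapd : ∀ (ψ : X.carrier → Finset E) (c : k),
      Finsupp.lmapDomain k k (corrApp (toSet R)) (Finsupp.single ψ c)
        = Finsupp.single (corrApp (toSet R) ψ) c := by
    intro ψ c
    rw [Finsupp.lmapDomain_apply, Finsupp.mapDomain_single]
  rw [Finset.sum_congr rfl (fun ψ _ => hmapd ψ _)]
  -- group the RHS by fibers
  have hfib : ∀ ψ : X.carrier → Finset E,
      Finsupp.single (corrApp (toSet R) ψ) (∑ φ : X.carrier → Finset E,
          ((kappa φ ψ : ℤ) : k) * β (M.map (WE φ) m))
      = ∑ χ : Y.carrier → Finset E, Finsupp.single χ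
          (indk k (corrApp (toSet R) ψ = χ) * (∑ φ : X.carrier → Finset E,
            ((kappa φ ψ : ℤ) : k) * β (M.map (WE φ) m))) := by
    intro ψ
    have e1 : ∑ χ : Y.carrier → Finset E, Finsupp.single χ
          (indk k (corrApp (toSet R) ψ = χ) * (∑ φ : X.carrier → Finset E,
            ((kappa φ ψ : ℤ) : k) * β (M.map (WE φ) m)))
        = ∑ χ : Y.carrier → Finset E,
            (if corrApp (toSet R) ψ = χ then Finsupp.single χ (∑ φ : X.carrier → Finset E,
              ((kappa φ ψ : ℤ) : k) * β (M.map (WE φ) m)) else 0) := by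
      refine Finset.sum_congr rfl (fun χ _ => ?_)
      by_cases h : corrApp (toSet R) ψ = χ <;> simp [indk, h]
    rw [e1, Finset.sum_ite_eq]
    simp
  rw [Finset.sum_congr rfl (fun ψ _ => hfib ψ), Finset.sum_comm]
  refine Finset.sum_congr rfl (fun χ _ => ?_)
  have hWE : ∀ φ' : Y.carrier → Finset E,
      β (M.map (WE φ') (M.map R m)) = β (M.map (WE (piR R φ')) m) := by
    intro φ'
    have happ : M.map (WE φ') (M.map R m) = M.map (R ≫ WE φ') m := by
      rw [M.map_comp]; rfl
    rw [happ, WE_comp]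
  have hcastL : ∀ θ : X.carrier → Finset E,
      ∑ ψ : X.carrier → Finset E,
          indk k (corrApp (toSet R) ψ = χ) * ((kappa θ ψ : ℤ) : k)
        = ∑ φ' : Y.carrier → Finset E,
          indk k (piR R φ' = θ) * ((kappa φ' χ : ℤ) : k) := by
    intro θ
    have h := natcoeff R θ χ
    have hL : ∑ ψ : X.carrier → Finset E,
        indk k (corrApp (toSet R) ψ = χ) * ((kappa θ ψ : ℤ) : k)
        = ((∑ ψ : X.carrier → Finset E,
            ind (corrApp (toSet R) ψ = χ) * kappa θ ψ : ℤ) : k) := by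
      rw [Int.cast_sum]
      exact Finset.sum_congr rfl (fun ψ _ => by rw [Int.cast_mul, cast_ind])
    have hR : ∑ φ' : Y.carrier → Finset E,
        indk k (piR R φ' = θ) * ((kappa φ' χ : ℤ) : k)
        = ((∑ φ' : Y.carrier → Finset E, ind (piR R φ' = θ) * kappa φ' χ : ℤ) : k) := by
      rw [Int.cast_sum]
      exact Finset.sum_congr rfl (fun φ' _ => by rw [Int.cast_mul, cast_ind])
    rw [hL, hR, h]
  have scalar : ∑ φ' : Y.carrier → Finset E,
      ((kappa φ' χ : ℤ) : k) * β (M.map (WE φ') (M.map R m))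
      = ∑ ψ : X.carrier → Finset E, indk k (corrApp (toSet R) ψ = χ)
          * (∑ φ : X.carrier → Finset E, ((kappa φ ψ : ℤ) : k) * β (M.map (WE φ) m)) := by
    have e1 : ∀ φ' : Y.carrier → Finset E,
        ((kappa φ' χ : ℤ) : k) * β (M.map (WE φ') (M.map R m))
        = ∑ θ : X.carrier → Finset E,
            indk k (piR R φ' = θ) * ((kappa φ' χ : ℤ) : k) * β (M.map (WE θ) m) := by
      intro φ'
      rw [hWE φ', ← sum_indk_right (piR R φ') (fun θ => β (M.map (WE θ) m)),
        Finset.mul_sum]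
      exact Finset.sum_congr rfl (fun θ _ => by ring)
    have e2 : ∀ ψ : X.carrier → Finset E,
        indk k (corrApp (toSet R) ψ = χ)
            * (∑ φ : X.carrier → Finset E, ((kappa φ ψ : ℤ) : k) * β (M.map (WE φ) m))
        = ∑ θ : X.carrier → Finset E,
            indk k (corrApp (toSet R) ψ = χ) * ((kappa θ ψ : ℤ) : k)
              * β (M.map (WE θ) m) := by
      intro ψ
      rw [Finset.mul_sum]
      exact Finset.sum_congr rfl (fun θ _ => by ring)
    calc ∑ φ' : Y.carrier → Finset E,
        ((kappa φ' χ : ℤ) : k) * β (M.map (WE φ') (M.map R m))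
        = ∑ φ' : Y.carrier → Finset E, ∑ θ : X.carrier → Finset E,
            indk k (piR R φ' = θ) * ((kappa φ' χ : ℤ) : k) * β (M.map (WE θ) m) :=
          Finset.sum_congr rfl (fun φ' _ => e1 φ')
      _ = ∑ θ : X.carrier → Finset E, ∑ φ' : Y.carrier → Finset E,
            indk k (piR R φ' = θ) * ((kappa φ' χ : ℤ) : k) * β (M.map (WE θ) m) :=
          Finset.sum_comm
      _ = ∑ θ : X.carrier → Finset E, (∑ φ' : Y.carrier → Finset E,
            indk k (piR R φ' = θ) * ((kappa φ' χ : ℤ) : k)) * β (M.map (WE θ) m) :=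
          Finset.sum_congr rfl (fun θ _ => (Finset.sum_mul _ _ _).symm)
      _ = ∑ θ : X.carrier → Finset E, (∑ ψ : X.carrier → Finset E,
            indk k (corrApp (toSet R) ψ = χ) * ((kappa θ ψ : ℤ) : k))
              * β (M.map (WE θ) m) :=
          Finset.sum_congr rfl (fun θ _ => by rw [hcastL θ])
      _ = ∑ θ : X.carrier → Finset E, ∑ ψ : X.carrier → Finset E,
            indk k (corrApp (toSet R) ψ = χ) * ((kappa θ ψ : ℤ) : k)
              * β (M.map (WE θ) m) :=
          Finset.sum_congr rfl (fun θ _ => Finset.sum_mul _ _ _)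
      _ = ∑ ψ : X.carrier → Finset E, ∑ θ : X.carrier → Finset E,
            indk k (corrApp (toSet R) ψ = χ) * ((kappa θ ψ : ℤ) : k)
              * β (M.map (WE θ) m) :=
          Finset.sum_comm
      _ = ∑ ψ : X.carrier → Finset E, indk k (corrApp (toSet R) ψ = χ)
          * (∑ φ : X.carrier → Finset E, ((kappa φ ψ : ℤ) : k) * β (M.map (WE φ) m)) :=
          Finset.sum_congr rfl (fun ψ _ => (e2 ψ).symm)
  rw [scalar]
  exact map_sum (Finsupp.singleAddHom χ)
    (fun ψ => indk k (corrApp (toSet R) ψ = χ)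
      * (∑ φ : X.carrier → Finset E, ((kappa φ ψ : ℤ) : k) * β (M.map (WE φ) m))) univ

/-- The evaluation functional on `F_B(obE E)`. -/
noncomputable def LamE (k : Type) [CommRing k] (E : Type) [Fintype E] :
    (((obE E).carrier → Finset E) →₀ k) →ₗ[k] k :=
  Finsupp.linearCombination k (fun ξ : (obE E).carrier → Finset E =>
    indk k (∀ e : E, e ∉ ξ e))

/-- Reconstruction : every natural transformation into `F_B` is a theta. -/
lemma theta_recon (M : CorrCat ⥤ ModuleCat k) (f : M ⟶ FT k (Finset E))
    (X : CorrCat) (m : M.obj X) :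
    thetaApp M ((LamE k E).comp (f.app (obE E)).hom) X m = f.app X m := by
  set v : (X.carrier → Finset E) →₀ k := f.app X m with hv
  have hsingle : ∀ (φ : X.carrier → Finset E) (χ : X.carrier → Finset E) (c : k),
      (FT k (Finset E)).map (WE φ) (Finsupp.single χ c)
        = Finsupp.single (corrApp (toSet (WE φ)) χ) c := by
    intro φ χ c
    show Finsupp.lmapDomain k k (corrApp (toSet (WE φ))) (Finsupp.single χ c) = _
    rw [Finsupp.lmapDomain_apply, Finsupp.mapDomain_single]
  have hβ : ∀ φ : X.carrier → Finset E,
      ((LamE k E).comp (f.app (obE E)).hom) (M.map (WE φ) m)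
        = ∑ χ : X.carrier → Finset E, indk k (χ ≤ φ) * v χ := by
    intro φ
    have hnat : f.app (obE E) (M.map (WE φ) m) = (FT k (Finset E)).map (WE φ) v := by
      have h := f.naturality (WE φ)
      calc f.app (obE E) (M.map (WE φ) m) = (M.map (WE φ) ≫ f.app (obE E)) m := rfl
        _ = (f.app X ≫ (FT k (Finset E)).map (WE φ)) m := by rw [h]
        _ = (FT k (Finset E)).map (WE φ) v := rfl
    have hcomp : ((LamE k E).comp (f.app (obE E)).hom) (M.map (WE φ) m)
        = (LamE k E) (f.app (obE E) (M.map (WE φ) m)) := rfl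
    rw [hcomp, hnat]
    change (LamE k E) (Finsupp.lmapDomain k k (corrApp (toSet (WE φ))) v) = _
    conv_lhs => rw [← finsupp_decomp v]
    rw [map_sum, map_sum]
    refine Finset.sum_congr rfl (fun χ _ => ?_)
    rw [Finsupp.lmapDomain_apply, Finsupp.mapDomain_single]
    rw [LamE, Finsupp.linearCombination_single]
    rw [smul_eq_mul, mul_comm]
    congr 1
    exact indk_congr (corrApp_WE_diag φ χ)
  rw [thetaApp_apply]
  have hcoeff : ∀ ψ : X.carrier → Finset E,
      ∑ φ : X.carrier → Finset E,
        ((kappa φ ψ : ℤ) : k) * (((LamE k E).comp (f.app (obE E)).hom) (M.map (WE φ) m))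
      = v ψ := by
    intro ψ
    rw [Finset.sum_congr rfl (fun φ _ => by rw [hβ φ])]
    have e1 : ∀ φ : X.carrier → Finset E,
        ((kappa φ ψ : ℤ) : k) * (∑ χ : X.carrier → Finset E, indk k (χ ≤ φ) * v χ)
        = ∑ χ : X.carrier → Finset E,
            indk k (χ ≤ φ) * ((kappa φ ψ : ℤ) : k) * v χ := by
      intro φ
      rw [Finset.mul_sum]
      exact Finset.sum_congr rfl (fun χ _ => by ring)
    rw [Finset.sum_congr rfl (fun φ _ => e1 φ), Finset.sum_comm]
    have e2 : ∀ χ : X.carrier → Finset E,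
        ∑ φ : X.carrier → Finset E, indk k (χ ≤ φ) * ((kappa φ ψ : ℤ) : k) * v χ
        = indk k (χ = ψ) * v χ := by
      intro χ
      rw [← Finset.sum_mul]
      congr 1
      have hcast : ∑ φ : X.carrier → Finset E, indk k (χ ≤ φ) * ((kappa φ ψ : ℤ) : k)
          = ((∑ φ : X.carrier → Finset E, ind (χ ≤ φ) * kappa φ ψ : ℤ) : k) := by
        rw [Int.cast_sum]
        exact Finset.sum_congr rfl (fun φ _ => by rw [Int.cast_mul, cast_ind])
      rw [hcast, kappa_delta, cast_ind]
    rw [Finset.sum_congr rfl (fun χ _ => e2 χ)]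
    exact sum_indk_left ψ (fun χ => v χ)
  rw [Finset.sum_congr rfl (fun ψ _ => by rw [hcoeff ψ])]
  exact finsupp_decomp v

/-- Theta as a natural transformation. -/
noncomputable def thetaNat (M : CorrCat ⥤ ModuleCat k)
    (β : M.obj (obE E) →ₗ[k] k) : M ⟶ FT k (Finset E) where
  app X := ModuleCat.ofHom (thetaApp M β X)
  naturality := by
    intro X Y R
    refine ModuleCat.hom_ext (LinearMap.ext (fun m => ?_))
    exact theta_natural M β R m

lemma thetaApp_comp {M M' : CorrCat ⥤ ModuleCat k} (ι : M ⟶ M')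
    (β' : M'.obj (obE E) →ₗ[k] k) (X : CorrCat) (m : M.obj X) :
    thetaApp M' β' X (ι.app X m) = thetaApp M (β'.comp (ι.app (obE E)).hom) X m := by
  rw [thetaApp_apply, thetaApp_apply]
  refine Finset.sum_congr rfl (fun ψ _ => ?_)
  congr 1
  refine Finset.sum_congr rfl (fun φ _ => ?_)
  congr 1
  have h := ι.naturality (WE φ)
  have : M'.map (WE φ) (ι.app X m) = ι.app (obE E) (M.map (WE φ) m) := by
    calc M'.map (WE φ) (ι.app X m) = (ι.app X ≫ M'.map (WE φ)) m := rfl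
      _ = (M.map (WE φ) ≫ ι.app (obE E)) m := by rw [← h]
      _ = ι.app (obE E) (M.map (WE φ) m) := rfl
  rw [this]
  rfl

/-- The Boolean-lattice correspondence functor is injective. -/
theorem FB_injective (k : Type) [CommRing k] (E : Type) [Fintype E]
    (hk : Module.Injective k k) :
    CategoryTheory.Injective (FT k (Finset E)) := by
  constructor
  intro M M' g f hf
  have hmono : Mono (f.app (obE E)) := inferInstance
  have hinj : Function.Injective (f.app (obE E)) :=
    (ModuleCat.mono_iff_injective (f.app (obE E))).1 hmono
  obtain ⟨β', hβ'⟩ := hk.out (f.app (obE E)).hom hinj ((LamE k E).comp (g.app (obE E)).hom)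
  refine ⟨thetaNat M' β', ?_⟩
  refine NatTrans.ext ?_
  funext X
  refine ModuleCat.hom_ext (LinearMap.ext (fun m => ?_))
  show thetaApp M' β' X (f.app X m) = g.app X m
  rw [thetaApp_comp f β' X m]
  have hβeq : β'.comp (f.app (obE E)).hom = (LamE k E).comp (g.app (obE E)).hom :=
    LinearMap.ext hβ'
  rw [hβeq]
  exact theta_recon M g X m

/-- The Boolean-lattice correspondence functor is projective. -/
theorem FB_projective (k : Type) [CommRing k] (E : Type) [Fintype E] :
    CategoryTheory.Projective (FT k (Finset E)) := by
  constructor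
  intro Mf N f e he
  have hepi : Epi (e.app (obE E)) := inferInstance
  have hsurj : Function.Surjective (e.app (obE E)) :=
    (ModuleCat.epi_iff_surjective (e.app (obE E))).1 hepi
  obtain ⟨m, hm⟩ := hsurj (f.app (obE E) (Finsupp.single (eta E) 1))
  have hFTsingle : ∀ {X Y : CorrCat} (R : X ⟶ Y) (ψ : X.carrier → Finset E) (c : k),
      (FT k (Finset E)).map R (Finsupp.single ψ c)
        = Finsupp.single (corrApp (toSet R) ψ) c := by
    intro X Y R ψ c
    show Finsupp.lmapDomain k k (corrApp (toSet R)) (Finsupp.single ψ c) = _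
    rw [Finsupp.lmapDomain_apply, Finsupp.mapDomain_single]
  refine ⟨{ app := fun X => ModuleCat.ofHom (Finsupp.linearCombination k (fun ψ : X.carrier → Finset E => Mf.map (QE ψ) m)), naturality := ?_ }, ?_⟩
  · intro X Y R
    refine ModuleCat.hom_ext (Finsupp.lhom_ext (fun ψ c => ?_))
    show (Finsupp.linearCombination k (fun ψ : Y.carrier → Finset E => Mf.map (QE ψ) m))
        ((FT k (Finset E)).map R (Finsupp.single ψ c))
      = Mf.map R ((Finsupp.linearCombination k
          (fun ψ : X.carrier → Finset E => Mf.map (QE ψ) m)) (Finsupp.single ψ c))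
    rw [hFTsingle R ψ c, Finsupp.linearCombination_single,
      Finsupp.linearCombination_single, map_smul]
    congr 1
    rw [QE_comp, Mf.map_comp]
    rfl
  · refine NatTrans.ext ?_
    funext X
    refine ModuleCat.hom_ext (Finsupp.lhom_ext (fun ψ c => ?_))
    show e.app X (Finsupp.linearCombination k _ (Finsupp.single ψ c))
      = f.app X (Finsupp.single ψ c)
    rw [Finsupp.linearCombination_single, map_smul]
    have h3 : e.app X (Mf.map (QE ψ) m) = f.app X (Finsupp.single ψ 1) := by
      have he1 : e.app X (Mf.map (QE ψ) m) = N.map (QE ψ) (e.app (obE E) m) := by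
        have h := e.naturality (QE ψ)
        calc e.app X (Mf.map (QE ψ) m) = (Mf.map (QE ψ) ≫ e.app X) m := rfl
          _ = (e.app (obE E) ≫ N.map (QE ψ)) m := by rw [h]
          _ = N.map (QE ψ) (e.app (obE E) m) := rfl
      rw [he1, hm]
      have hf1 : N.map (QE ψ) (f.app (obE E) (Finsupp.single (eta E) 1))
          = f.app X ((FT k (Finset E)).map (QE ψ) (Finsupp.single (eta E) 1)) := by
        have h := f.naturality (QE ψ)
        calc N.map (QE ψ) (f.app (obE E) (Finsupp.single (eta E) 1))
            = (f.app (obE E) ≫ N.map (QE ψ)) (Finsupp.single (eta E) 1) := rfl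
          _ = ((FT k (Finset E)).map (QE ψ) ≫ f.app X) (Finsupp.single (eta E) 1) := by
              rw [h]
          _ = f.app X ((FT k (Finset E)).map (QE ψ) (Finsupp.single (eta E) 1)) := rfl
      rw [hf1]
      congr 1
      rw [hFTsingle (QE ψ) (eta E) 1]
      congr 1
      exact corrApp_QE ψ
    erw [h3, ← map_smul, Finsupp.smul_single, smul_eq_mul, mul_one]

end CFFunc


namespace CFRetract

open CFAux CFMain CFFunc Finset CategoryTheory

lemma FT_map_single {k : Type} [CommRing k] {L : Type} [Lattice L] [OrderBot L] [Fintype L]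
    {X Y : CorrCat} (Q : X ⟶ Y) (φ : X.carrier → L) (c : k) :
    (FT k L).map Q (Finsupp.single φ c) = Finsupp.single (corrApp (toSet Q) φ) c := by
  show Finsupp.lmapDomain k k (corrApp (toSet Q)) (Finsupp.single φ c) = _
  rw [Finsupp.lmapDomain_apply, Finsupp.mapDomain_single]

lemma corrApp_comp_hom {L L' : Type} [Lattice L] [OrderBot L] [Lattice L'] [OrderBot L']
    (u : L → L') (hsup : ∀ a b, u (a ⊔ b) = u a ⊔ u b) (hbot : u ⊥ = ⊥)
    {Xc Yc : Type} [Fintype Xc] (Q : Set (Yc × Xc)) (φ : Xc → L) :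
    corrApp Q (fun x => u (φ x)) = fun y => u (corrApp Q φ y) := by
  funext y
  exact (Finset.comp_sup_eq_sup_comp u hsup hbot).symm

/-- A sup-bot-preserving map of lattices induces a natural transformation. -/
noncomputable def mapNat (k : Type) [CommRing k] {L L' : Type}
    [Lattice L] [OrderBot L] [Fintype L] [Lattice L'] [OrderBot L'] [Fintype L']
    (u : L → L') (hsup : ∀ a b, u (a ⊔ b) = u a ⊔ u b) (hbot : u ⊥ = ⊥) :
    FT k L ⟶ FT k L' where
  app X := ModuleCat.ofHom (Finsupp.lmapDomain k k (fun φ : X.carrier → L => fun x => u (φ x)))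
  naturality := by
    intro X Y Q
    refine ModuleCat.hom_ext (Finsupp.lhom_ext (fun φ c => ?_))
    show Finsupp.lmapDomain k k (fun φ : Y.carrier → L => fun y => u (φ y))
        ((FT k L).map Q (Finsupp.single φ c))
      = (FT k L').map Q ((Finsupp.lmapDomain k k
          (fun φ : X.carrier → L => fun x => u (φ x))) (Finsupp.single φ c))
    rw [FT_map_single, Finsupp.lmapDomain_apply, Finsupp.mapDomain_single,
      Finsupp.lmapDomain_apply, Finsupp.mapDomain_single, FT_map_single]
    congr 1
    exact (corrApp_comp_hom u hsup hbot (toSet Q) φ).symm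

variable (T : Type) [DistribLattice T] [Fintype T] [BoundedOrder T]

/-- Embedding of a finite distributive lattice into its Boolean envelope. -/
noncomputable def iT : T → Finset T := fun a => univ.filter (fun t => SupPrime t ∧ t ≤ a)

/-- Retraction: the join. -/
noncomputable def rT : Finset T → T := fun s => s.sup id

lemma iT_sup (a b : T) : iT T (a ⊔ b) = iT T a ⊔ iT T b := by
  ext t
  simp only [iT, mem_filter, mem_univ, true_and, Finset.sup_eq_union, Finset.mem_union]
  constructor
  · rintro ⟨hp, hle⟩
    rcases hp.le_sup.1 hle with h | h
    · exact Or.inl ⟨hp, h⟩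
    · exact Or.inr ⟨hp, h⟩
  · rintro (⟨hp, h⟩ | ⟨hp, h⟩)
    · exact ⟨hp, h.trans le_sup_left⟩
    · exact ⟨hp, h.trans le_sup_right⟩

lemma iT_bot : iT T ⊥ = ⊥ := by
  rw [Finset.bot_eq_empty, Finset.eq_empty_iff_forall_notMem]
  intro t ht
  rw [iT, mem_filter] at ht
  exact ht.2.1.ne_bot (le_bot_iff.1 ht.2.2)

lemma rT_sup (s s' : Finset T) : rT T (s ⊔ s') = rT T s ⊔ rT T s' := by
  show (s ⊔ s').sup id = s.sup id ⊔ s'.sup id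
  rw [Finset.sup_eq_union, Finset.sup_union]

lemma rT_bot : rT T ⊥ = ⊥ := by
  show Finset.sup ⊥ id = ⊥
  rw [Finset.bot_eq_empty, Finset.sup_empty]

lemma rT_iT (a : T) : rT T (iT T a) = a := by
  apply le_antisymm
  · exact Finset.sup_le (fun t ht => (Finset.mem_filter.1 ht).2.2)
  · obtain ⟨s, hsup, hirr⟩ := exists_supIrred_decomposition a
    conv_lhs => rw [← hsup]
    refine Finset.sup_le (fun b hb => ?_)
    have hble : b ≤ a := by
      conv_rhs => rw [← hsup]
      exact Finset.le_sup (f := id) hb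
    exact Finset.le_sup (f := id) (Finset.mem_filter.2
      ⟨mem_univ _, supPrime_iff_supIrred.2 (hirr hb), hble⟩)

variable (k : Type) [CommRing k]

noncomputable def sigmaNat : FT k T ⟶ FT k (Finset T) :=
  mapNat k (iT T) (iT_sup T) (iT_bot T)

noncomputable def rhoNat : FT k (Finset T) ⟶ FT k T :=
  mapNat k (rT T) (rT_sup T) (rT_bot T)

lemma sigma_rho : sigmaNat T k ≫ rhoNat T k = 𝟙 (FT k T) := by
  refine NatTrans.ext ?_
  funext X
  refine ModuleCat.hom_ext (Finsupp.lhom_ext (fun φ c => ?_))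
  show (Finsupp.lmapDomain k k (fun φ : X.carrier → Finset T => fun x => rT T (φ x)))
      ((Finsupp.lmapDomain k k (fun φ : X.carrier → T => fun x => iT T (φ x)))
        (Finsupp.single φ c))
    = Finsupp.single φ c
  rw [Finsupp.lmapDomain_apply, Finsupp.lmapDomain_apply, Finsupp.mapDomain_single,
    Finsupp.mapDomain_single]
  congr 1
  funext x
  exact rT_iT T (φ x)

end CFRetract

/-- **Statement 11.** If `k` is a self-injective commutative ring, then for every finite
distributive lattice `T`, the correspondence functor `F_T` is both projective and
injective in the category of correspondence functors over `k`. -/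
theorem FT_projective_and_injective_of_selfInjective (k : Type) [CommRing k]
    (hk : Module.Injective k k)
    (T : Type) [DistribLattice T] [Fintype T] [BoundedOrder T] :
    CategoryTheory.Projective (FT k T) ∧ CategoryTheory.Injective (FT k T) := by
  constructor
  · constructor
    intro E' X' f e he
    obtain ⟨h, hh⟩ := (CFFunc.FB_projective k T).factors (CFRetract.rhoNat T k ≫ f) e
    refine ⟨CFRetract.sigmaNat T k ≫ h, ?_⟩
    rw [Category.assoc, hh, ← Category.assoc, CFRetract.sigma_rho, Category.id_comp]
  · constructor
    intro X' Y' g f hf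
    obtain ⟨h, hh⟩ := (CFFunc.FB_injective k T hk).factors (g ≫ CFRetract.sigmaNat T k) f
    refine ⟨h ≫ CFRetract.rhoNat T k, ?_⟩
    rw [← Category.assoc, hh, Category.assoc, CFRetract.sigma_rho, Category.comp_id]
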